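/- (Theorem 2.13) Let M be a topological space, Φ a continuous semi-process on M, and W ⊂ M × ℝ an open set with W ∩ {t = 0} ≠ ∅ such that every egress point of W is a strict egress point (W⁻ = W⁻⁻) and the set W₀⁻⁻ of strict egress points at time t = 0 is nonempty. Let x₀ be a uniformly Lyapunov stable equilibrium of Φ and let U ⊂ M be an open set with x₀ ∈ U such that the closure of U times ℝ is contained in W. Suppose there is a continuous path Γ : [0,1] → M × ℝ with Γ(s) ∈ W₀ for all s ∈ (0,1), Γ(0) = (x₀, 0), and Γ(1) ∈ W₀⁻⁻. Then x₀ is not globally attractive for Φ. -/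
import Mathlib


open scoped ENNReal

/-- The egress time of `x` (with initial time `0`) from `W ⊆ M × ℝ` for the
semi-process `Φ` (written `Φ x t₀ t` for `Φ_{t₀,t}(x)`):
`σ(x) = sup {τ ≥ 0 : (Φ_{0,t}(x), t) ∈ W for all t ∈ [0, τ)}`, valued in `ℝ≥0∞`.
For `(x, 0) ∈ ∂W` this supremum equals `0`. -/
noncomputable def spEgressTime {M : Type*}
    (Φ : M → ℝ → ℝ → M) (W : Set (M × ℝ)) (x : M) : ℝ≥0∞ :=
  sSup {τ : ℝ≥0∞ | ∀ t : ℝ, 0 ≤ t → ENNReal.ofReal t < τ → (Φ x 0 t, t) ∈ W}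

/-- Egress points of `W ⊆ M × ℝ` for the semi-process `Φ`: boundary points
`(x₁, t₁)` such that either `t₁ > 0` and `(x₁, t₁) = (Φ_{0,σ(x)}(x), σ(x))` for some
`(x, 0) ∈ W`, or `t₁ = 0` and the forward trajectory of `x₁` leaves `W ∪ ∂W`
immediately. -/
def spEgress {M : Type*} [TopologicalSpace M]
    (Φ : M → ℝ → ℝ → M) (W : Set (M × ℝ)) : Set (M × ℝ) :=
  {p ∈ frontier W |
    (0 < p.2 ∧ ∃ x : M, (x, (0 : ℝ)) ∈ W ∧ spEgressTime Φ W x ≠ ⊤ ∧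
      p.2 = (spEgressTime Φ W x).toReal ∧ p.1 = Φ x 0 (spEgressTime Φ W x).toReal) ∨
    (p.2 = 0 ∧ ∃ ε > (0 : ℝ), ∀ t ∈ Set.Ioo (0 : ℝ) ε, (Φ p.1 0 t, t) ∉ W ∪ frontier W)}

/-- Strict egress points of `W ⊆ M × ℝ` for the semi-process `Φ`: egress points
whose continued trajectory stays outside `W ∪ ∂W` for a positive time interval
(by the semigroup property, `(Φ_{0,σ(x)+t}(x), σ(x)+t) = (Φ_{t₁,t}(x₁), t₁ + t)`). -/
def spStrictEgress {M : Type*} [TopologicalSpace M]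
    (Φ : M → ℝ → ℝ → M) (W : Set (M × ℝ)) : Set (M × ℝ) :=
  {p ∈ spEgress Φ W |
    ∃ ε > (0 : ℝ), ∀ t ∈ Set.Ioo (0 : ℝ) ε, (Φ p.1 p.2 t, p.2 + t) ∉ W ∪ frontier W}

/-- The section `S_τ = {(x, t) ∈ S : t = τ}` of a subset of the extended phase space. -/
def timeSection {M : Type*} (S : Set (M × ℝ)) (τ : ℝ) : Set (M × ℝ) :=
  {p ∈ S | p.2 = τ}

open Set Filter Topology in
private lemma spEgressTime_spec' {M : Type*} (Φ : M → ℝ → ℝ → M) (W : Set (M × ℝ)) (x : M)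
    {t : ℝ} (ht : 0 ≤ t) (h : ENNReal.ofReal t < spEgressTime Φ W x) :
    (Φ x 0 t, t) ∈ W := by
  obtain ⟨τ, hτ, hlt⟩ := lt_sSup_iff.mp h
  exact hτ t ht hlt

private lemma spEgressTime_eq_top' {M : Type*} (Φ : M → ℝ → ℝ → M) (W : Set (M × ℝ)) (x : M)
    (h : ∀ t : ℝ, 0 ≤ t → (Φ x 0 t, t) ∈ W) : spEgressTime Φ W x = ⊤ :=
  top_unique (le_sSup fun t ht _ => h t ht)

private lemma spEgressTime_le' {M : Type*} (Φ : M → ℝ → ℝ → M) (W : Set (M × ℝ)) (x : M)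
    {t : ℝ} (ht : 0 ≤ t) (h : (Φ x 0 t, t) ∉ W) :
    spEgressTime Φ W x ≤ ENNReal.ofReal t := by
  by_contra hc
  exact h (spEgressTime_spec' Φ W x ht (lt_of_not_ge hc))

/-- Theorem 2.13: for a continuous semi-process `Φ` on `M` and an open
`W ⊆ M × ℝ` with `W ∩ {t = 0} ≠ ∅`, `W⁻ = W⁻⁻` and `W₀⁻⁻ ≠ ∅`, if `x₀` is a
uniformly Lyapunov stable equilibrium, `U ∋ x₀` is open with `closure U × ℝ ⊆ W`,
and `Γ` is a continuous path in `W₀` from `(x₀, 0)` to a point of `W₀⁻⁻`,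
then `x₀` is not globally attractive. -/
theorem not_globally_attractive_of_wazewski
    {M : Type*} [TopologicalSpace M] (Φ : M → ℝ → ℝ → M)
    (hΦcont : ContinuousOn (fun q : M × ℝ × ℝ => Φ q.1 q.2.1 q.2.2) {q | 0 ≤ q.2.2})
    (hΦ0 : ∀ x t₀, Φ x t₀ 0 = x)
    (hΦadd : ∀ (x : M) (t₀ t s : ℝ), 0 ≤ t → 0 ≤ s →
      Φ x t₀ (t + s) = Φ (Φ x t₀ t) (t₀ + t) s)
    (W : Set (M × ℝ)) (hWopen : IsOpen W)
    (hW0ne : (timeSection W 0).Nonempty)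
    (hWeq : spEgress Φ W = spStrictEgress Φ W)
    (hW0e : (timeSection (spStrictEgress Φ W) 0).Nonempty)
    (x₀ : M)
    (hequil : ∀ t₀ ≥ (0 : ℝ), ∀ t ≥ (0 : ℝ), Φ x₀ t₀ t = x₀)
    (hstab : ∀ U' : Set M, IsOpen U' → x₀ ∈ U' → ∃ V : Set M, IsOpen V ∧ x₀ ∈ V ∧
      ∀ x ∈ V, ∀ t₀ ≥ (0 : ℝ), ∀ t ≥ (0 : ℝ), Φ x t₀ t ∈ U')
    (U : Set M) (hUopen : IsOpen U) (hx₀U : x₀ ∈ U)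
    (hUW : (closure U) ×ˢ (Set.univ : Set ℝ) ⊆ W)
    (Γ : ℝ → M × ℝ) (hΓcont : ContinuousOn Γ (Set.Icc 0 1))
    (hΓW : ∀ s ∈ Set.Ioo (0 : ℝ) 1, Γ s ∈ timeSection W 0)
    (hΓ0 : Γ 0 = (x₀, 0))
    (hΓ1 : Γ 1 ∈ timeSection (spStrictEgress Φ W) 0) :
    ¬ ∀ x : M, Filter.Tendsto (fun t => Φ x 0 t) Filter.atTop (nhds x₀) := by
  intro hglob
  classical
  -- the "time-extended" flow map, continuous on all of `M × ℝ`
  obtain ⟨G, hGcont, hGeq⟩ : ∃ G : M × ℝ → M × ℝ, Continuous G ∧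
      ∀ (y : M) (t : ℝ), 0 ≤ t → G (y, t) = (Φ y 0 t, t) := by
    refine ⟨fun q => (Φ q.1 0 (max q.2 0), q.2), ?_, ?_⟩
    · refine Continuous.prodMk ?_ continuous_snd
      exact hΦcont.comp_continuous
        (continuous_fst.prodMk (continuous_const.prodMk
          (continuous_snd.max continuous_const)))
        (fun q => le_max_right q.2 0)
    · intro y t ht
      simp only [max_eq_left ht]
  set f : ℝ → ℝ≥0∞ := fun s => spEgressTime Φ W (Γ s).1 with hfdef
  -- Endpoint 0 : infinite egress time
  have hf0 : f 0 = ⊤ := by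
    apply spEgressTime_eq_top'
    intro t ht
    have h1 : (Γ 0).1 = x₀ := by rw [hΓ0]
    rw [h1, hequil 0 le_rfl t ht]
    exact hUW ⟨subset_closure hx₀U, Set.mem_univ _⟩
  -- Endpoint 1 : finite egress time, from the strict-egress structure of `Γ 1`
  obtain ⟨hΓ1se, hΓ1t⟩ := hΓ1
  obtain ⟨hΓ1e, -⟩ := hΓ1se
  obtain ⟨hΓ1fr, hdisj⟩ := hΓ1e
  have hΓ1leave : ∃ ε > (0 : ℝ), ∀ t ∈ Set.Ioo (0 : ℝ) ε,
      (Φ (Γ 1).1 0 t, t) ∉ W ∪ frontier W := by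
    rcases hdisj with ⟨hpos, -⟩ | ⟨-, h⟩
    · rw [hΓ1t] at hpos; exact absurd hpos (lt_irrefl 0)
    · exact h
  obtain ⟨ε₁, hε₁, hleave₁⟩ := hΓ1leave
  have hf1 : f 1 ≠ ⊤ := by
    have hmem : (Φ (Γ 1).1 0 (ε₁ / 2), ε₁ / 2) ∉ W := fun h =>
      hleave₁ (ε₁ / 2) ⟨half_pos hε₁, half_lt_self hε₁⟩ (Set.mem_union_left _ h)
    exact ne_top_of_le_ne_top ENNReal.ofReal_ne_top
      (spEgressTime_le' Φ W _ (half_pos hε₁).le hmem)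
  -- Openness of the "finite egress time" condition
  have hBopen : ∀ x : M, ∀ t' : ℝ, 0 ≤ t' → (Φ x 0 t', t') ∉ closure W →
      ∃ N : Set M, IsOpen N ∧ x ∈ N ∧ ∀ y ∈ N, spEgressTime Φ W y ≠ ⊤ := by
    intro x t' ht' hx
    refine ⟨(fun y => G (y, t')) ⁻¹' (closure W)ᶜ, ?_, ?_, ?_⟩
    · exact (isClosed_closure.isOpen_compl).preimage
        (hGcont.comp (continuous_id.prodMk continuous_const))
    · rw [Set.mem_preimage, hGeq x t' ht']; exact hx
    · intro y hy
      rw [Set.mem_preimage, hGeq y t' ht'] at hy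
      have : (Φ y 0 t', t') ∉ W := fun h => hy (subset_closure h)
      exact ne_top_of_le_ne_top ENNReal.ofReal_ne_top (spEgressTime_le' Φ W y ht' this)
  -- Openness of the "infinite egress time" condition (uses stability + attraction)
  have hAopen : ∀ x : M, spEgressTime Φ W x = ⊤ →
      ∃ N : Set M, IsOpen N ∧ x ∈ N ∧ ∀ y ∈ N, spEgressTime Φ W y = ⊤ := by
    intro x hx
    have htraj : ∀ t : ℝ, 0 ≤ t → (Φ x 0 t, t) ∈ W := by
      intro t ht
      exact spEgressTime_spec' Φ W x ht (by rw [hx]; exact ENNReal.ofReal_lt_top)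
    obtain ⟨V, hVopen, hx₀V, hV⟩ := hstab U hUopen hx₀U
    obtain ⟨T₀, hT₀⟩ := (Filter.eventually_atTop).mp
      ((hglob x).eventually (hVopen.mem_nhds hx₀V))
    set T : ℝ := max T₀ 0 with hTdef
    have hT0 : (0 : ℝ) ≤ T := le_max_right _ _
    have hΦxT : Φ x 0 T ∈ V := hT₀ T (le_max_left _ _)
    -- tube lemma on `[0, T]`
    have hsub : ({x} : Set M) ×ˢ Set.Icc (0 : ℝ) T ⊆ G ⁻¹' W := by
      rintro ⟨y, t⟩ ⟨hy, ht⟩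
      rcases hy with rfl
      rw [Set.mem_preimage, hGeq y t ht.1]
      exact htraj t ht.1
    obtain ⟨u, v, hu, hv, hxu, hIv, huv⟩ :=
      generalized_tube_lemma isCompact_singleton isCompact_Icc
        (hWopen.preimage hGcont) hsub
    refine ⟨u ∩ (fun y => (G (y, T)).1) ⁻¹' V, ?_, ?_, ?_⟩
    · exact hu.inter (hVopen.preimage
        (continuous_fst.comp (hGcont.comp (continuous_id.prodMk continuous_const))))
    · constructor
      · exact hxu rfl
      · rw [Set.mem_preimage, hGeq x T hT0]; exact hΦxT
    · rintro y ⟨hyu, hyV⟩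
      rw [Set.mem_preimage, hGeq y T hT0] at hyV
      apply spEgressTime_eq_top'
      intro t ht
      rcases le_or_gt t T with hcase | hcase
      · have : (y, t) ∈ u ×ˢ v := ⟨hyu, hIv ⟨ht, hcase⟩⟩
        have := huv this
        rwa [Set.mem_preimage, hGeq y t ht] at this
      · have heq : Φ y 0 t = Φ (Φ y 0 T) (0 + T) (t - T) := by
          have h1 := hΦadd y 0 T (t - T) hT0 (by linarith)
          rwa [show T + (t - T) = t by ring] at h1
        rw [heq]
        have : Φ (Φ y 0 T) (0 + T) (t - T) ∈ U :=
          hV _ hyV (0 + T) (by simpa using hT0) (t - T) (by linarith)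
        exact hUW ⟨subset_closure this, Set.mem_univ _⟩
  -- In the finite case, the trajectory genuinely leaves `closure W`
  have hfin : ∀ s₀ ∈ Set.Icc (0 : ℝ) 1, f s₀ ≠ ⊤ →
      ∃ t' : ℝ, 0 ≤ t' ∧ (Φ (Γ s₀).1 0 t', t') ∉ closure W := by
    intro s₀ hs₀ hfne
    rcases eq_or_lt_of_le hs₀.1 with h0 | h0
    · exact absurd hf0.symm (by rw [← h0] at hfne; exact fun h => hfne h.symm)
    rcases eq_or_lt_of_le hs₀.2 with h1 | h1
    · -- s₀ = 1
      subst h1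
      refine ⟨ε₁ / 2, (half_pos hε₁).le, ?_⟩
      rw [closure_eq_self_union_frontier]
      exact hleave₁ (ε₁ / 2) ⟨half_pos hε₁, half_lt_self hε₁⟩
    · -- s₀ ∈ (0,1) : build the egress point and use strictness
      set x := (Γ s₀).1 with hxdef
      have hΓs₀ := hΓW s₀ ⟨h0, h1⟩
      have hxW : (x, (0 : ℝ)) ∈ W := by
        have hpair : ((Γ s₀).1, (0 : ℝ)) = Γ s₀ := by
          rw [← hΓs₀.2]
        rw [hxdef, hpair]; exact hΓs₀.1
      have hcx : Continuous fun t : ℝ => G (x, t) :=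
        hGcont.comp (continuous_const.prodMk continuous_id)
      -- positivity of the egress time
      have hσpos : 0 < spEgressTime Φ W x := by
        have h0' : G (x, 0) ∈ W := by rw [hGeq x 0 le_rfl, hΦ0]; exact hxW
        have hnb : (fun t : ℝ => G (x, t)) ⁻¹' W ∈ nhds (0 : ℝ) :=
          hcx.continuousAt.preimage_mem_nhds (hWopen.mem_nhds h0')
        obtain ⟨δ, hδpos, hδ⟩ := Metric.mem_nhds_iff.mp hnb
        have : ENNReal.ofReal δ ≤ spEgressTime Φ W x := by
          apply le_sSup
          intro t ht hlt
          have htδ : t < δ := (ENNReal.ofReal_lt_ofReal_iff hδpos).mp hlt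
          have : G (x, t) ∈ W := hδ (by
            simp only [Metric.mem_ball, Real.dist_eq, sub_zero, abs_of_nonneg ht]
            exact htδ)
          rwa [hGeq x t ht] at this
        exact lt_of_lt_of_le (ENNReal.ofReal_pos.mpr hδpos) this
      have hfne' : spEgressTime Φ W x ≠ ⊤ := hfne
      set σr : ℝ := (spEgressTime Φ W x).toReal with hσrdef
      have hσr : 0 < σr := ENNReal.toReal_pos hσpos.ne' hfne'
      have traj : ∀ t : ℝ, 0 ≤ t → t < σr → (Φ x 0 t, t) ∈ W := by
        intro t ht hlt
        exact spEgressTime_spec' Φ W x ht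
          ((ENNReal.ofReal_lt_iff_lt_toReal ht hfne').mpr hlt)
      -- exit point not in W
      have hpnotW : (Φ x 0 σr, σr) ∉ W := by
        intro hp
        have hGp : G (x, σr) ∈ W := by rw [hGeq x σr hσr.le]; exact hp
        have hnb : (fun t : ℝ => G (x, t)) ⁻¹' W ∈ nhds σr :=
          hcx.continuousAt.preimage_mem_nhds (hWopen.mem_nhds hGp)
        obtain ⟨δ, hδpos, hδ⟩ := Metric.mem_nhds_iff.mp hnb
        have hle : ENNReal.ofReal (σr + δ / 2) ≤ spEgressTime Φ W x := by
          apply le_sSup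
          intro t ht hlt
          have htδ : t < σr + δ / 2 :=
            (ENNReal.ofReal_lt_ofReal_iff (by linarith)).mp hlt
          rcases lt_or_ge t σr with hcase | hcase
          · exact traj t ht hcase
          · have : G (x, t) ∈ W := hδ (by
              simp only [Metric.mem_ball, Real.dist_eq]
              rw [abs_of_nonneg (by linarith)]
              linarith)
            rwa [hGeq x t ht] at this
        have hlt2 : spEgressTime Φ W x < ENNReal.ofReal (σr + δ / 2) := by
          conv_lhs => rw [← ENNReal.ofReal_toReal hfne']
          rw [ENNReal.ofReal_lt_ofReal_iff (by linarith)]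
          simpa [hσrdef] using by linarith
        exact absurd (lt_of_lt_of_le hlt2 hle) (lt_irrefl _)
      -- exit point is in closure W
      have hpcl : (Φ x 0 σr, σr) ∈ closure W := by
        have htend : Filter.Tendsto (fun t : ℝ => G (x, t)) (nhdsWithin σr (Set.Iio σr))
            (nhds ((Φ x 0 σr, σr) : M × ℝ)) := by
          have h := (hcx.tendsto σr).mono_left
            (nhdsWithin_le_nhds (s := Set.Iio σr))
          rwa [hGeq x σr hσr.le] at h
        have hev : ∀ᶠ t in nhdsWithin σr (Set.Iio σr), G (x, t) ∈ W := by
          filter_upwards [Ioo_mem_nhdsLT hσr] with t ht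
          rw [hGeq x t ht.1.le]
          exact traj t ht.1.le ht.2
        exact mem_closure_of_tendsto htend hev
      -- the exit point is an egress point, hence strict
      have hpE : ((Φ x 0 σr, σr) : M × ℝ) ∈ spEgress Φ W := by
        refine ⟨?_, Or.inl ⟨hσr, x, hxW, hfne', rfl, rfl⟩⟩
        rw [hWopen.frontier_eq]
        exact ⟨hpcl, hpnotW⟩
      rw [hWeq] at hpE
      obtain ⟨-, ε, hε, hleave⟩ := hpE
      refine ⟨σr + ε / 2, by linarith, ?_⟩
      have hsg : Φ x 0 (σr + ε / 2) = Φ (Φ x 0 σr) (0 + σr) (ε / 2) :=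
        hΦadd x 0 σr (ε / 2) hσr.le (by linarith)
      rw [zero_add] at hsg
      have hnot := hleave (ε / 2) ⟨half_pos hε, half_lt_self hε⟩
      rw [closure_eq_self_union_frontier, hsg]
      exact hnot
  -- pull open sets in `M` back along `Γ`
  have pull : ∀ s ∈ Set.Icc (0 : ℝ) 1, ∀ N : Set M, IsOpen N → (Γ s).1 ∈ N →
      ∃ O : Set ℝ, IsOpen O ∧ s ∈ O ∧ ∀ s' ∈ O ∩ Set.Icc 0 1, (Γ s').1 ∈ N := by
    intro s hs N hN hmem
    have h1 : Prod.fst ⁻¹' N ∈ nhds (Γ s) := (hN.preimage continuous_fst).mem_nhds hmem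
    have h2 := (hΓcont s hs).preimage_mem_nhdsWithin h1
    obtain ⟨O, hO, hsO, hsub⟩ := mem_nhdsWithin.mp h2
    exact ⟨O, hO, hsO, fun s' hs' => hsub hs'⟩
  -- assemble the connectedness contradiction
  set u : Set ℝ := ⋃₀ {O : Set ℝ | IsOpen O ∧ ∀ s ∈ O ∩ Set.Icc (0:ℝ) 1, f s = ⊤} with hudef
  set v : Set ℝ := ⋃₀ {O : Set ℝ | IsOpen O ∧ ∀ s ∈ O ∩ Set.Icc (0:ℝ) 1, f s ≠ ⊤} with hvdef
  have hu : IsOpen u := isOpen_sUnion fun O hO => hO.1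
  have hv : IsOpen v := isOpen_sUnion fun O hO => hO.1
  have hmem_u : ∀ s ∈ Set.Icc (0 : ℝ) 1, f s = ⊤ → s ∈ u := by
    intro s hs hfs
    obtain ⟨N, hNopen, hNmem, hN⟩ := hAopen (Γ s).1 hfs
    obtain ⟨O, hO, hsO, hOsub⟩ := pull s hs N hNopen hNmem
    exact ⟨O, ⟨hO, fun s' hs' => hN _ (hOsub s' hs')⟩, hsO⟩
  have hmem_v : ∀ s ∈ Set.Icc (0 : ℝ) 1, f s ≠ ⊤ → s ∈ v := by
    intro s hs hfs
    obtain ⟨t', ht', hnot⟩ := hfin s hs hfs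
    obtain ⟨N, hNopen, hNmem, hN⟩ := hBopen (Γ s).1 t' ht' hnot
    obtain ⟨O, hO, hsO, hOsub⟩ := pull s hs N hNopen hNmem
    exact ⟨O, ⟨hO, fun s' hs' => hN _ (hOsub s' hs')⟩, hsO⟩
  have hcover : Set.Icc (0 : ℝ) 1 ⊆ u ∪ v := by
    intro s hs
    by_cases hfs : f s = ⊤
    · exact Or.inl (hmem_u s hs hfs)
    · exact Or.inr (hmem_v s hs hfs)
  have hne1 : (Set.Icc (0 : ℝ) 1 ∩ u).Nonempty :=
    ⟨0, ⟨le_rfl, zero_le_one⟩, hmem_u 0 ⟨le_rfl, zero_le_one⟩ hf0⟩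
  have hne2 : (Set.Icc (0 : ℝ) 1 ∩ v).Nonempty :=
    ⟨1, ⟨zero_le_one, le_rfl⟩, hmem_v 1 ⟨zero_le_one, le_rfl⟩ hf1⟩
  obtain ⟨s, hsI, hsu, hsv⟩ := isPreconnected_Icc u v hu hv hcover hne1 hne2
  obtain ⟨O₁, hO₁, hsO₁⟩ := hsu
  obtain ⟨O₂, hO₂, hsO₂⟩ := hsv
  exact hO₂.2 s ⟨hsO₂, hsI⟩ (hO₁.2 s ⟨hsO₁, hsI⟩)
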